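/- Let f : ℝⁿ → ℝ be differentiable, μ-strongly convex with minimizer X⋆, and let X be a twice differentiable solution of 0 = Ẍ + 2√μ Ẋ + ∇f(X) on [0,∞) with X(0) = X₀, Ẋ(0) = 0. Then for all t ≥ 0, f(X(t)) − f⋆ ≤ e^{−√μ t}( f(X₀) − f⋆ + (μ/2)‖X₀ − X⋆‖² ). -/

import Mathlib

open Filter MeasureTheory
open scoped RealInnerProductSpace Topology

theorem sc_agm_ode_rate
    {E : Type*} [NormedAddCommGroup E] [InnerProductSpace ℝ E] [CompleteSpace E]
    (f : E → ℝ) (g : E → E)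
    (hgrad : ∀ x, HasGradientAt f (g x) x)
    (μ : ℝ) (hμ : 0 < μ)
    (hsc : ∀ x y, f x + ⟪g x, y - x⟫ + (μ / 2) * ‖y - x‖ ^ 2 ≤ f y)
    (X X' X'' : ℝ → E)
    (hX' : ∀ t ∈ Set.Ici (0:ℝ), HasDerivAt X (X' t) t)
    (hX'' : ∀ t ∈ Set.Ici (0:ℝ), HasDerivAt X' (X'' t) t)
    (hODE : ∀ t ∈ Set.Ici (0:ℝ),
      X'' t + (2 * Real.sqrt μ) • X' t + g (X t) = 0)
    (X₀ : E) (hX0 : X 0 = X₀) (hXd0 : X' 0 = 0)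
    (Xs : E) (hmin : ∀ x, f Xs ≤ f x) :
    ∀ t ≥ (0:ℝ),
      f (X t) - f Xs ≤
        Real.exp (-(Real.sqrt μ) * t)
          * (f X₀ - f Xs + (μ / 2) * ‖X₀ - Xs‖ ^ 2) := by
  set s := Real.sqrt μ with hsdef
  have hs : 0 < s := Real.sqrt_pos.mpr hμ
  have hs2 : s * s = μ := Real.mul_self_sqrt hμ.le
  set u : ℝ → E := fun r => X' r + s • (X r - Xs) with hudef
  set V : ℝ → ℝ := fun r => f (X r) - f Xs + (1/2) * ⟪u r, u r⟫ with hVdef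
  set W : ℝ → ℝ := fun r => Real.exp (s * r) * V r with hWdef
  -- derivative of V
  have hVd : ∀ r ∈ Set.Ici (0:ℝ),
      HasDerivAt V (⟪g (X r), X' r⟫
        + (1/2) * (⟪u r, X'' r + s • X' r⟫ + ⟪X'' r + s • X' r, u r⟫)) r := by
    intro r hr
    have h1 : HasDerivAt (fun p => f (X p)) (⟪g (X r), X' r⟫) r := by
      have := (hgrad (X r)).hasFDerivAt.comp_hasDerivAt r (hX' r hr)
      simpa [InnerProductSpace.toDual_apply_apply, Function.comp_def] using this
    have h2 : HasDerivAt u (X'' r + s • X' r) r :=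
      (hX'' r hr).add (((hX' r hr).sub_const Xs).const_smul s)
    exact (h1.sub_const _).add ((h2.inner ℝ h2).const_mul _)
  -- derivative of W
  have hWd : ∀ r ∈ Set.Ici (0:ℝ),
      HasDerivAt W (Real.exp (s * r) *
        ((s * V r) + (⟪g (X r), X' r⟫
          + (1/2) * (⟪u r, X'' r + s • X' r⟫ + ⟪X'' r + s • X' r, u r⟫)))) r := by
    intro r hr
    have he : HasDerivAt (fun p => Real.exp (s * p)) (s * Real.exp (s * r)) r := by
      have h0 : HasDerivAt (fun p : ℝ => s * p) s r := by
        simpa using (hasDerivAt_id r).const_mul s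
      simpa [mul_comm] using h0.exp
    have := he.mul (hVd r hr)
    refine this.congr_deriv ?_
    ring
  -- the derivative of W is nonpositive
  have hWneg : ∀ r ∈ Set.Ici (0:ℝ),
      Real.exp (s * r) *
        ((s * V r) + (⟪g (X r), X' r⟫
          + (1/2) * (⟪u r, X'' r + s • X' r⟫ + ⟪X'' r + s • X' r, u r⟫))) ≤ 0 := by
    intro r hr
    have hupd : X'' r + s • X' r = -(s • X' r + g (X r)) := by
      have h : (X'' r + s • X' r) + (s • X' r + g (X r)) = 0 := by
        rw [← hODE r hr]; module
      exact add_eq_zero_iff_eq_neg.mp h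
    apply mul_nonpos_of_nonneg_of_nonpos (Real.exp_pos _).le
    rw [hupd]
    simp only [hVdef, hudef]
    set a := X r - Xs with ha
    set v := X' r with hv
    set G := g (X r) with hG
    have hkey : f (X r) - f Xs ≤ ⟪G, a⟫ - (μ/2) * ⟪a, a⟫ := by
      have h := hsc (X r) Xs
      have h2 : ⟪G, Xs - X r⟫ = -⟪G, a⟫ := by
        rw [ha, ← inner_neg_right, neg_sub]
      have h3 : ‖Xs - X r‖ ^ 2 = ⟪a, a⟫ := by
        rw [real_inner_self_eq_norm_sq, ha, norm_sub_rev]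
      rw [h2, h3] at h
      linarith
    simp only [inner_add_left, inner_add_right, inner_neg_left, inner_neg_right,
      real_inner_smul_left, real_inner_smul_right]
    have c1 : ⟪a, v⟫ = ⟪v, a⟫ := real_inner_comm v a
    have c2 : ⟪G, v⟫ = ⟪v, G⟫ := real_inner_comm v G
    have c3 : ⟪G, a⟫ = ⟪a, G⟫ := real_inner_comm a G
    have hvv : (0:ℝ) ≤ ⟪v, v⟫ := real_inner_self_nonneg
    have e1 : s * (s * (s * ⟪a, a⟫)) = μ * (s * ⟪a, a⟫) := by
      rw [← mul_assoc, ← mul_assoc, hs2, mul_assoc]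
    nlinarith [mul_le_mul_of_nonneg_left hkey hs.le, mul_nonneg hs.le hvv, e1,
      mul_le_mul_of_nonneg_left hkey hs.le]
  -- W is antitone on Ici 0
  have hanti : AntitoneOn W (Set.Ici 0) := by
    apply antitoneOn_of_deriv_nonpos (convex_Ici 0)
    · intro r hr
      exact (hWd r hr).continuousAt.continuousWithinAt
    · intro r hr
      rw [interior_Ici] at hr
      exact (hWd r (Set.Ioi_subset_Ici_self hr)).differentiableAt.differentiableWithinAt
    · intro r hr
      rw [interior_Ici] at hr
      rw [(hWd r (Set.Ioi_subset_Ici_self hr)).deriv]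
      exact hWneg r (Set.Ioi_subset_Ici_self hr)
  intro t ht
  have hW0 : W 0 = f X₀ - f Xs + (μ / 2) * ‖X₀ - Xs‖ ^ 2 := by
    simp only [hWdef, hVdef, hudef, hX0, hXd0, zero_add, mul_zero, Real.exp_zero, one_mul]
    rw [real_inner_smul_left, real_inner_smul_right, real_inner_self_eq_norm_sq]
    ring_nf
    rw [sq, hs2]
    ring
  have hle : W t ≤ W 0 := hanti Set.self_mem_Ici ht ht
  have hVt : f (X t) - f Xs ≤ V t := by
    have : (0:ℝ) ≤ ⟪u t, u t⟫ := real_inner_self_nonneg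
    simp only [hVdef]; linarith
  have hexp : Real.exp (-(s) * t) * W t = V t := by
    simp only [hWdef]
    rw [← mul_assoc, ← Real.exp_add]
    have : -s * t + s * t = 0 := by ring
    rw [this, Real.exp_zero, one_mul]
  calc f (X t) - f Xs ≤ V t := hVt
    _ = Real.exp (-s * t) * W t := hexp.symm
    _ ≤ Real.exp (-s * t) * W 0 := by
        exact mul_le_mul_of_nonneg_left hle (Real.exp_pos _).le
    _ = _ := by rw [hW0]
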